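/- Let p be the orthogonal projection of ℓ²(ℤ) onto the closed span of {e_i : i ≥ 0}, and let u₀ be the bilateral shift. Then the commutator p ∘ u₀ - u₀ ∘ p is a compact operator (in fact of rank one). -/
import Mathlib


noncomputable section

/-- `H` is `ℓ²(ℤ)`. -/
abbrev HZ : Type := lp (fun _ : ℤ => ℂ) 2

/-- The standard orthonormal basis vectors `e i` of `ℓ²(ℤ)`. -/
noncomputable def e (i : ℤ) : HZ := lp.single 2 i (1 : ℂ)

lemma default_hb_eq_e (i : ℤ) : (default : HilbertBasis ℤ ℂ HZ) i = e i := by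
  have h := congrArg (default : HilbertBasis ℤ ℂ HZ).repr.symm
    (HilbertBasis.repr_self (default : HilbertBasis ℤ ℂ HZ) i)
  rw [LinearIsometryEquiv.symm_apply_apply] at h
  exact h.trans rfl

lemma orthonormal_e : Orthonormal ℂ e := by
  have h := (default : HilbertBasis ℤ ℂ HZ).orthonormal
  rwa [funext default_hb_eq_e] at h

lemma dense_span_e : Dense (Submodule.span ℂ (Set.range e) : Set HZ) := by
  have h := (default : HilbertBasis ℤ ℂ HZ).dense_span
  rw [funext default_hb_eq_e] at h
  rw [← Submodule.dense_iff_topologicalClosure_eq_top] at h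
  exact h

lemma isCompactOperator_toSpanSingleton (v : HZ) :
    IsCompactOperator ⇑(ContinuousLinearMap.toSpanSingleton ℂ v) := by
  refine ⟨(ContinuousLinearMap.toSpanSingleton ℂ v) '' Metric.closedBall 0 1,
    (isCompact_closedBall 0 1).image (ContinuousLinearMap.toSpanSingleton ℂ v).continuous, ?_⟩
  exact Filter.mem_of_superset (Metric.closedBall_mem_nhds 0 one_pos)
    (fun c hc => Set.mem_preimage.mpr ⟨c, hc, rfl⟩)

/-- If `u₀` is the bilateral shift (`u₀ (e i) = e (i+1)`) and `p` is the orthogonal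
projection onto the closed span of `{e i : i ≥ 0}` (characterized by `p (e i) = e i`
for `i ≥ 0` and `p (e i) = 0` for `i < 0`, together with `p` being a self-adjoint
idempotent), then the commutator `p ∘ u₀ - u₀ ∘ p` is a compact operator. -/
theorem stmt1 (u₀ p : HZ →L[ℂ] HZ)
    (hu : ∀ i : ℤ, u₀ (e i) = e (i + 1))
    (hp : ∀ i : ℤ, p (e i) = if 0 ≤ i then e i else 0)
    (hidem : p ∘L p = p) (hsa : IsSelfAdjoint p) :
    IsCompactOperator ⇑(p ∘L u₀ - u₀ ∘L p) := by
  set T : HZ →L[ℂ] HZ := (innerSL ℂ (e (-1))).smulRight (e 0) with hTdef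
  have hinner := orthonormal_iff_ite.mp orthonormal_e
  have hT : (p ∘L u₀ - u₀ ∘L p) = T := by
    refine ContinuousLinearMap.ext_on dense_span_e ?_
    rintro _ ⟨i, rfl⟩
    simp only [ContinuousLinearMap.sub_apply, ContinuousLinearMap.comp_apply, hu, hp,
      hTdef, ContinuousLinearMap.smulRight_apply, innerSL_apply_apply, hinner]
    rcases lt_trichotomy i (-1) with h | h | h
    · rw [if_neg (by omega), if_neg (by omega), if_neg (by omega), map_zero, sub_zero]
      simp
    · subst h
      rw [if_pos (by omega), if_neg (by omega), if_pos rfl, map_zero, sub_zero]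
      norm_num
    · rw [if_pos (by omega), if_pos (by omega), if_neg (by omega), hu]
      simp
  rw [hT]
  have : ⇑T = ⇑(ContinuousLinearMap.toSpanSingleton ℂ (e 0)) ∘ ⇑(innerSL ℂ (e (-1))) := by
    funext x; rfl
  rw [this]
  exact (isCompactOperator_toSpanSingleton (e 0)).comp_clm (innerSL ℂ (e (-1)))
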